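/- Let U be a finite universe, R an equivalence relation on U, X ⊆ U and β₁, β₂ ∈ [0, 1/2) with β₁ ≤ β₂. Then the accuracy of approximation is monotone increasing in β: αX(β₁) ≤ αX(β₂), where αX(β) = |X̲(β)| / |X̄(β)| (with the convention that the quotient is 0 when the denominator is 0). -/

import Mathlib

/-- The equivalence class of `y` under the equivalence relation `R`, as a finset. -/
def eqClass {U : Type*} [Fintype U] [DecidableEq U] (R : Setoid U)
    [DecidableRel R.r] (y : U) : Finset U :=
  Finset.univ.filter (fun x => R.r x y)

/-- Relative degree of misclassification `d(A,B) = 1 - |A ∩ B| / |A|`. -/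
def misclass {U : Type*} [DecidableEq U] (A B : Finset U) : ℚ :=
  1 - ((A ∩ B).card : ℚ) / (A.card : ℚ)

/-- β-lower approximation: union of classes `R[y]` with `d(R[y],X) ≤ β`. -/
def lowerApprox {U : Type*} [Fintype U] [DecidableEq U] (R : Setoid U)
    [DecidableRel R.r] (X : Finset U) (β : ℚ) : Finset U :=
  (Finset.univ.filter (fun y => misclass (eqClass R y) X ≤ β)).biUnion (eqClass R)

/-- β-upper approximation: union of classes `R[y]` with `R[y] ∩ X ≠ ∅` and
`d(R[y],X) ≤ 1 - β`. -/
def upperApprox {U : Type*} [Fintype U] [DecidableEq U] (R : Setoid U)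
    [DecidableRel R.r] (X : Finset U) (β : ℚ) : Finset U :=
  (Finset.univ.filter (fun y =>
    (eqClass R y ∩ X).Nonempty ∧ misclass (eqClass R y) X ≤ 1 - β)).biUnion (eqClass R)

/-- Negative region: union of classes `R[y]` with `d(R[y],X) > 1 - β`. -/
def negRegion {U : Type*} [Fintype U] [DecidableEq U] (R : Setoid U)
    [DecidableRel R.r] (X : Finset U) (β : ℚ) : Finset U :=
  (Finset.univ.filter (fun y => 1 - β < misclass (eqClass R y) X)).biUnion (eqClass R)

/-- Boundary region: `BNX(β) = X̄(β) \ X̲(β)`. -/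
def bndRegion {U : Type*} [Fintype U] [DecidableEq U] (R : Setoid U)
    [DecidableRel R.r] (X : Finset U) (β : ℚ) : Finset U :=
  upperApprox R X β \ lowerApprox R X β

/-- Accuracy of approximation `αX(β) = |X̲(β)| / |X̄(β)|` (with `q/0 = 0` in `ℚ`). -/
def accuracy {U : Type*} [Fintype U] [DecidableEq U] (R : Setoid U)
    [DecidableRel R.r] (X : Finset U) (β : ℚ) : ℚ :=
  ((lowerApprox R X β).card : ℚ) / ((upperApprox R X β).card : ℚ)

lemma lowerApprox_mono {U : Type*} [Fintype U] [DecidableEq U] (R : Setoid U)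
    [DecidableRel R.r] (X : Finset U) {β₁ β₂ : ℚ} (h : β₁ ≤ β₂) :
    lowerApprox R X β₁ ⊆ lowerApprox R X β₂ := by
  apply Finset.biUnion_subset_biUnion_of_subset_left
  intro y hy
  simp only [Finset.mem_filter] at *
  exact ⟨hy.1, hy.2.trans h⟩

lemma upperApprox_anti {U : Type*} [Fintype U] [DecidableEq U] (R : Setoid U)
    [DecidableRel R.r] (X : Finset U) {β₁ β₂ : ℚ} (h : β₁ ≤ β₂) :
    upperApprox R X β₂ ⊆ upperApprox R X β₁ := by
  apply Finset.biUnion_subset_biUnion_of_subset_left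
  intro y hy
  simp only [Finset.mem_filter] at *
  exact ⟨hy.1, hy.2.1, hy.2.2.trans (by linarith)⟩

lemma lowerApprox_subset_upperApprox {U : Type*} [Fintype U] [DecidableEq U] (R : Setoid U)
    [DecidableRel R.r] (X : Finset U) {β : ℚ} (hβ0 : 0 ≤ β) (hβ1 : β < 1/2) :
    lowerApprox R X β ⊆ upperApprox R X β := by
  apply Finset.biUnion_subset_biUnion_of_subset_left
  intro y hy
  simp only [Finset.mem_filter] at *
  refine ⟨hy.1, ?_, hy.2.trans (by linarith)⟩
  have hyc : y ∈ eqClass R y := by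
    simp [eqClass]
  have hcard : 0 < ((eqClass R y).card : ℚ) := by
    exact_mod_cast Finset.card_pos.mpr ⟨y, hyc⟩
  have hm := hy.2
  unfold misclass at hm
  rw [Finset.card_pos.symm]
  by_contra hne
  push_neg at hne
  rw [Finset.card_eq_zero.mpr (Finset.not_nonempty_iff_eq_empty.mp (by simpa using hne))] at hm
  simp at hm
  linarith

theorem accuracy_mono {U : Type*} [Fintype U] [DecidableEq U] (R : Setoid U)
    [DecidableRel R.r] (X : Finset U) (β₁ β₂ : ℚ) (hβ₁0 : 0 ≤ β₁) (hβ₁1 : β₁ < 1/2)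
    (hβ₂0 : 0 ≤ β₂) (hβ₂1 : β₂ < 1/2) (h : β₁ ≤ β₂) :
    accuracy R X β₁ ≤ accuracy R X β₂ := by
  have hL : (lowerApprox R X β₁).card ≤ (lowerApprox R X β₂).card :=
    Finset.card_le_card (lowerApprox_mono R X h)
  have hU : (upperApprox R X β₂).card ≤ (upperApprox R X β₁).card :=
    Finset.card_le_card (upperApprox_anti R X h)
  have hLU : (lowerApprox R X β₂).card ≤ (upperApprox R X β₂).card :=
    Finset.card_le_card (lowerApprox_subset_upperApprox R X hβ₂0 hβ₂1)
  unfold accuracy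
  rcases Nat.eq_zero_or_pos (upperApprox R X β₂).card with h0 | hpos
  · have hL2 : (lowerApprox R X β₂).card = 0 := by omega
    have hL1 : (lowerApprox R X β₁).card = 0 := by omega
    simp [h0, hL1, hL2]
  · apply div_le_div₀ (by positivity) (by exact_mod_cast hL)
    · exact_mod_cast hpos
    · exact_mod_cast hU
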